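/- arXiv:1311.6342 — 3 statements merged into one kernel-verified Lean document; each statement's English description precedes it below -/
import Mathlib

section
/- Let G be a non-abelian group. The commuting graph of G contains no 3-cycle (triangle) if and only if G is isomorphic to the symmetric group S₃, the quaternion group Q₈, or the dihedral group D₈ of order 8. -/
def commGraph (G : Type*) [Group G] : SimpleGraph G where
  Adj x y := x ≠ y ∧ x ∉ Subgroup.center G ∧ y ∉ Subgroup.center G ∧ x * y = y * x
  symm := by
    constructor
    rintro x y ⟨h1, h2, h3, h4⟩
    exact ⟨h1.symm, h3, h2, h4.symm⟩
  loopless := by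
    constructor
    rintro x ⟨h1, -⟩
    exact h1 rfl

lemma cliqueFree3_iff {V : Type*} (Γ : SimpleGraph V) :
    Γ.CliqueFree 3 ↔ ∀ x y z : V, Γ.Adj x y → Γ.Adj x z → Γ.Adj y z → False := by
  classical
  constructor
  · intro h x y z h1 h2 h3
    exact h {x, y, z} (SimpleGraph.is3Clique_triple_iff.2 ⟨h1, h2, h3⟩)
  · intro h s hs
    rw [SimpleGraph.is3Clique_iff] at hs
    obtain ⟨a, b, c, h1, h2, h3, -⟩ := hs
    exact h a b c h1 h2 h3

lemma commGraph_cliqueFree_congr {G H : Type*} [Group G] [Group H] (e : G ≃* H)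
    (h : (commGraph H).CliqueFree 3) : (commGraph G).CliqueFree 3 := by
  have hc : ∀ x : G, x ∉ Subgroup.center G → e x ∉ Subgroup.center H := by
    intro x hx hex
    apply hx
    rw [Subgroup.mem_center_iff] at hex ⊢
    intro g
    apply e.injective
    rw [map_mul, map_mul, hex (e g)]
  rw [cliqueFree3_iff] at h ⊢
  rintro x y z ⟨h1, h2, h3, h4⟩ ⟨h1', h2', h3', h4'⟩ ⟨h1'', h2'', h3'', h4''⟩
  refine h (e x) (e y) (e z) ⟨?_, hc _ h2, hc _ h3, ?_⟩ ⟨?_, hc _ h2', hc _ h3', ?_⟩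
    ⟨?_, hc _ h2'', hc _ h3'', ?_⟩ <;>
    simp [← map_mul, e.injective.ne_iff, h1, h1', h1'', h4, h4', h4'']

lemma commGraph_cliqueFree3_of (X : Type*) [Group X]
    (h : ∀ x y z : X, x ≠ y → x ≠ z → y ≠ z → x * y = y * x → x * z = z * x →
      y * z = z * y → (∃ g, g * x ≠ x * g) → (∃ g, g * y ≠ y * g) → (∃ g, g * z ≠ z * g) →
      False) : (commGraph X).CliqueFree 3 := by
  rw [cliqueFree3_iff]
  rintro x y z ⟨h1, h2, h3, h4⟩ ⟨h1', -, h3', h4'⟩ ⟨h1'', -, -, h4''⟩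
  have ne : ∀ w : X, w ∉ Subgroup.center X → ∃ g, g * w ≠ w * g := by
    intro w hw
    by_contra hc
    push_neg at hc
    exact hw (Subgroup.mem_center_iff.2 hc)
  exact h x y z h1 h1' h1'' h4 h4' h4'' (ne x h2) (ne y h3) (ne z h3')

set_option maxRecDepth 10000 in
lemma cf_s3 : (commGraph (Equiv.Perm (Fin 3))).CliqueFree 3 :=
  commGraph_cliqueFree3_of _ (by decide)

set_option maxRecDepth 10000 in
lemma cf_q8 : (commGraph (QuaternionGroup 2)).CliqueFree 3 :=
  commGraph_cliqueFree3_of _ (by decide)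

set_option maxRecDepth 10000 in
lemma cf_d8 : (commGraph (DihedralGroup 4)).CliqueFree 3 :=
  commGraph_cliqueFree3_of _ (by decide)

section rho
variable {H : Type*} [Group H] {n : ℕ} [NeZero n] {x : H}

lemma rho_add (hx : x ^ n = 1) (u v : ZMod n) :
    x ^ (u + v).val = x ^ u.val * x ^ v.val := by
  rw [ZMod.val_add, ← pow_add, ← pow_eq_pow_mod _ hx]

omit [NeZero n] in
lemma rho_zero : x ^ (0 : ZMod n).val = 1 := by
  rw [ZMod.val_zero, pow_zero]

lemma rho_neg (hx : x ^ n = 1) (u : ZMod n) : x ^ (-u).val = (x ^ u.val)⁻¹ := by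
  have := rho_add hx (-u) u
  rw [neg_add_cancel, rho_zero] at this
  rw [eq_inv_iff_mul_eq_one, ← this]

lemma rho_sub (hx : x ^ n = 1) (u v : ZMod n) :
    x ^ (u - v).val = x ^ u.val * (x ^ v.val)⁻¹ := by
  rw [sub_eq_add_neg, rho_add hx, rho_neg hx]

end rho

section lifts
variable {H : Type*} [Group H]

lemma genDihedral (n : ℕ) [NeZero n] (x t : H)
    (hx : x ^ n = 1) (hxo : ∀ m : ZMod n, x ^ m.val = 1 → m = 0)
    (ht : t * t = 1) (hrel : t * x * t = x⁻¹)
    (hnc : t * x ≠ x * t)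
    (hcov : ∀ g : H, ∃ i : ZMod n, g = x ^ i.val ∨ g = t * x ^ i.val) :
    Nonempty (H ≃* DihedralGroup n) := by
  have hcomm : ∀ a b : ℕ, (x ^ a)⁻¹ * x ^ b = x ^ b * (x ^ a)⁻¹ := fun a b =>
    (((Commute.refl x).pow_pow a b).inv_left).eq
  have hconj : ∀ m : ℕ, t * x ^ m * t = (x ^ m)⁻¹ := by
    intro m
    induction m with
    | zero => simpa using ht
    | succ k ih =>
      calc t * x ^ (k + 1) * t = (t * x ^ k) * (t * t) * (x * t) := by
            rw [ht, mul_one, pow_succ]; group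
        _ = (t * x ^ k * t) * (t * x * t) := by group
        _ = (x ^ k)⁻¹ * x⁻¹ := by rw [ih, hrel]
        _ = (x ^ (k + 1))⁻¹ := by rw [pow_succ', mul_inv_rev]
  have hkey : ∀ m : ℕ, x ^ m * t = t * (x ^ m)⁻¹ := by
    intro m
    have h1 : (x ^ m)⁻¹ * t = t * x ^ m := by
      rw [← hconj m, mul_assoc, ht, mul_one]
    calc x ^ m * t = x ^ m * (t * x ^ m) * (x ^ m)⁻¹ := by group
      _ = x ^ m * ((x ^ m)⁻¹ * t) * (x ^ m)⁻¹ := by rw [h1]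
      _ = t * (x ^ m)⁻¹ := by group
  let f : DihedralGroup n →* H := MonoidHom.mk'
    (fun g => match g with
      | DihedralGroup.r i => x ^ i.val
      | DihedralGroup.sr i => t * x ^ i.val)
    (by
      rintro (i | i) (j | j)
      · exact rho_add hx i j
      · show t * x ^ (j - i).val = x ^ i.val * (t * x ^ j.val)
        calc t * x ^ (j - i).val = t * (x ^ i.val)⁻¹ * x ^ j.val := by rw [rho_sub hx]; group
          _ = (x ^ i.val * t) * x ^ j.val := by rw [← hkey]
          _ = x ^ i.val * (t * x ^ j.val) := by group
      · show t * x ^ (i + j).val = t * x ^ i.val * x ^ j.val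
        rw [rho_add hx, mul_assoc]
      · show x ^ (j - i).val = t * x ^ i.val * (t * x ^ j.val)
        calc x ^ (j - i).val = (x ^ i.val)⁻¹ * x ^ j.val := by rw [rho_sub hx]; group
          _ = (t * t) * (x ^ i.val)⁻¹ * x ^ j.val := by rw [ht]; group
          _ = t * (t * (x ^ i.val)⁻¹) * x ^ j.val := by group
          _ = t * (x ^ i.val * t) * x ^ j.val := by rw [← hkey]
          _ = t * x ^ i.val * (t * x ^ j.val) := by group)
  have hinj : Function.Injective f := by
    rw [injective_iff_map_eq_one]
    rintro (i | i) h
    · have : i = 0 := hxo i h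
      rw [this]; rfl
    · exfalso
      apply hnc
      have hteq : t = (x ^ i.val)⁻¹ := by
        rw [eq_inv_iff_mul_eq_one]; exact h
      rw [hteq]; group
  have hsurj : Function.Surjective f := by
    intro g
    obtain ⟨i, hi | hi⟩ := hcov g
    · exact ⟨DihedralGroup.r i, hi.symm⟩
    · exact ⟨DihedralGroup.sr i, hi.symm⟩
  exact ⟨(MulEquiv.ofBijective f ⟨hinj, hsurj⟩).symm⟩

lemma genQuaternion (n : ℕ) [NeZero n] (x y : H)
    (hx : x ^ (2 * n) = 1) (hxo : ∀ m : ZMod (2 * n), x ^ m.val = 1 → m = 0)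
    (hy : y * y = x ^ ((n : ZMod (2 * n))).val) (hrel : y * x * y⁻¹ = x⁻¹)
    (hnc : y * x ≠ x * y)
    (hcov : ∀ g : H, ∃ i : ZMod (2 * n), g = x ^ i.val ∨ g = y * x ^ i.val) :
    Nonempty (H ≃* QuaternionGroup n) := by
  haveI : NeZero (2 * n) := ⟨by have := NeZero.ne n; omega⟩
  have hcomm : ∀ a b : ℕ, (x ^ a)⁻¹ * x ^ b = x ^ b * (x ^ a)⁻¹ := fun a b =>
    (((Commute.refl x).pow_pow a b).inv_left).eq
  have hconj : ∀ m : ℕ, y * x ^ m * y⁻¹ = (x ^ m)⁻¹ := by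
    intro m
    induction m with
    | zero => group
    | succ k ih =>
      calc y * x ^ (k + 1) * y⁻¹ = (y * x ^ k * y⁻¹) * (y * x * y⁻¹) := by
            rw [pow_succ]; group
        _ = (x ^ k)⁻¹ * x⁻¹ := by rw [ih, hrel]
        _ = (x ^ (k + 1))⁻¹ := by rw [pow_succ', mul_inv_rev]
  have hkey : ∀ m : ℕ, x ^ m * y = y * (x ^ m)⁻¹ := by
    intro m
    have h1 : y * x ^ m = (x ^ m)⁻¹ * y := by
      rw [← hconj m]; group
    calc x ^ m * y = x ^ m * (y * x ^ m) * (x ^ m)⁻¹ := by group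
      _ = x ^ m * ((x ^ m)⁻¹ * y) * (x ^ m)⁻¹ := by rw [h1]
      _ = y * (x ^ m)⁻¹ := by group
  let f : QuaternionGroup n →* H := MonoidHom.mk'
    (fun g => match g with
      | QuaternionGroup.a i => x ^ i.val
      | QuaternionGroup.xa i => y * x ^ i.val)
    (by
      rintro (i | i) (j | j)
      · exact rho_add hx i j
      · show y * x ^ (j - i).val = x ^ i.val * (y * x ^ j.val)
        calc y * x ^ (j - i).val = y * (x ^ i.val)⁻¹ * x ^ j.val := by rw [rho_sub hx]; group
          _ = (x ^ i.val * y) * x ^ j.val := by rw [← hkey]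
          _ = x ^ i.val * (y * x ^ j.val) := by group
      · show y * x ^ (i + j).val = y * x ^ i.val * x ^ j.val
        rw [rho_add hx, mul_assoc]
      · show x ^ (((n : ZMod (2 * n))) + j - i).val = y * x ^ i.val * (y * x ^ j.val)
        calc x ^ (((n : ZMod (2 * n))) + j - i).val
            = x ^ ((n : ZMod (2 * n))).val * x ^ j.val * (x ^ i.val)⁻¹ := by
              rw [rho_sub hx, rho_add hx]
          _ = (y * y) * x ^ j.val * (x ^ i.val)⁻¹ := by rw [hy]
          _ = y * (y * (x ^ i.val)⁻¹) * x ^ j.val := by group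
          _ = y * (x ^ i.val * y) * x ^ j.val := by rw [← hkey]
          _ = y * x ^ i.val * (y * x ^ j.val) := by group)
  have hinj : Function.Injective f := by
    rw [injective_iff_map_eq_one]
    rintro (i | i) h
    · have : i = 0 := hxo i h
      rw [this]; rfl
    · exfalso
      apply hnc
      have hteq : y = (x ^ i.val)⁻¹ := by
        rw [eq_inv_iff_mul_eq_one]; exact h
      rw [hteq]; group
  have hsurj : Function.Surjective f := by
    intro g
    obtain ⟨i, hi | hi⟩ := hcov g
    · exact ⟨QuaternionGroup.a i, hi.symm⟩
    · exact ⟨QuaternionGroup.xa i, hi.symm⟩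
  exact ⟨(MulEquiv.ofBijective f ⟨hinj, hsurj⟩).symm⟩

end lifts

set_option maxRecDepth 10000 in
lemma perm3_equiv_dihedral : Nonempty (Equiv.Perm (Fin 3) ≃* DihedralGroup 3) :=
  genDihedral 3 (finRotate 3) (Equiv.swap 0 1) (by decide) (by decide) (by decide)
    (by decide) (by decide) (by decide)

lemma hD_lemma {G : Type*} [Group G] (hcf : (commGraph G).CliqueFree 3) :
    ∀ x y : G, x ∉ Subgroup.center G → y ∉ Subgroup.center G → x ≠ y → x * y = y * x →
      x * y ∈ Subgroup.center G := by
  intro x y hx hy hxy hc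
  by_contra hns
  have hy1 : y ≠ 1 := by rintro rfl; exact hy (one_mem _)
  have hx1 : x ≠ 1 := by rintro rfl; exact hx (one_mem _)
  refine (cliqueFree3_iff _).1 hcf x y (x * y) ⟨hxy, hx, hy, hc⟩
    ⟨?_, hx, hns, ?_⟩ ⟨?_, hy, hns, ?_⟩
  · intro h
    exact hy1 (mul_left_cancel (a := x) (by rw [← h, mul_one]))
  · rw [hc, ← mul_assoc, hc]
  · intro h
    exact hx1 (mul_right_cancel (b := y) (by rw [← h, one_mul]))
  · rw [← mul_assoc, ← hc, mul_assoc]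


lemma ord3_lemma {H : Type*} [Group H] {a : H} (h3 : a ^ 3 = 1) (h1 : a ≠ 1) :
    ∀ m : ZMod 3, a ^ m.val = 1 → m = 0 := by
  have ho : orderOf a = 3 := orderOf_eq_prime h3 h1
  intro m hm
  have hd : (3 : ℕ) ∣ m.val := by
    have := orderOf_dvd_of_pow_eq_one hm
    rwa [ho] at this
  have hlt : m.val < 3 := m.val_lt
  have : m.val = 0 := by omega
  exact (ZMod.val_eq_zero _).1 this

lemma ord4_lemma {H : Type*} [Group H] {r : H} (h4 : r ^ 4 = 1) (h2 : r ^ 2 ≠ 1) :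
    ∀ m : ZMod 4, r ^ m.val = 1 → m = 0 := by
  have ho : orderOf r = 4 := by
    have := orderOf_eq_prime_pow (p := 2) (n := 1) (x := r) (by simpa using h2) (by norm_num [h4])
    simpa using this
  intro m hm
  have hd : (4 : ℕ) ∣ m.val := by
    have := orderOf_dvd_of_pow_eq_one hm
    rwa [ho] at this
  have hlt : m.val < 4 := m.val_lt
  have : m.val = 0 := by omega
  exact (ZMod.val_eq_zero _).1 this



section config
variable {G : Type*} [Group G]

lemma d8_config (z t r : G) (hz : ∀ u : G, z * u = u * z) (hz1 : z ≠ 1) (hzz : z * z = 1)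
    (ht : t * t = 1) (hr2 : r * r = z) (hnc : t * r ≠ r * t) (hba : r * t = t * r * z)
    (hcov8 : ∀ g : G, g = 1 ∨ g = z ∨ g = t ∨ g = t * z ∨ g = r ∨ g = r * z ∨ g = t * r ∨
      g = t * r * z) : Nonempty (G ≃* DihedralGroup 4) := by
  have hr4 : r ^ 4 = 1 := by
    calc r ^ 4 = (r * r) * (r * r) := by
          rw [pow_succ, pow_succ, pow_succ, pow_one, mul_assoc]
      _ = z * z := by rw [hr2]
      _ = 1 := hzz
  have hr2' : r ^ 2 ≠ 1 := by rw [pow_two, hr2]; exact hz1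
  have hrz : r * z = r⁻¹ := by
    have h1 : r * (r * z) = 1 := by rw [← mul_assoc, hr2, hzz]
    exact (inv_eq_of_mul_eq_one_right h1).symm
  have hrel : t * r * t = r⁻¹ := by
    rw [← hrz]
    calc t * r * t = t * (r * t) := by rw [mul_assoc]
      _ = t * (t * r * z) := by rw [hba]
      _ = (t * t) * (r * z) := by group
      _ = r * z := by rw [ht, one_mul]
  have hr3 : r ^ 3 = r * z := by
    calc r ^ 3 = r * (r * r) := by rw [pow_succ, pow_succ, pow_one, mul_assoc]
      _ = r * z := by rw [hr2]
  have v1 : ((1 : ZMod 4)).val = 1 := rfl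
  have v2 : ((2 : ZMod 4)).val = 2 := rfl
  have v3 : ((3 : ZMod 4)).val = 3 := rfl
  have hcov : ∀ g : G, ∃ i : ZMod 4, g = r ^ i.val ∨ g = t * r ^ i.val := by
    intro g
    rcases hcov8 g with h | h | h | h | h | h | h | h
    · exact ⟨0, Or.inl (by rw [h, ZMod.val_zero, pow_zero])⟩
    · exact ⟨2, Or.inl (by rw [h, v2, pow_two, hr2])⟩
    · exact ⟨0, Or.inr (by rw [h, ZMod.val_zero, pow_zero, mul_one])⟩
    · exact ⟨2, Or.inr (by rw [h, v2, pow_two, hr2])⟩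
    · exact ⟨1, Or.inl (by rw [h, v1, pow_one])⟩
    · exact ⟨3, Or.inl (by rw [h, v3, hr3])⟩
    · exact ⟨1, Or.inr (by rw [h, v1, pow_one])⟩
    · exact ⟨3, Or.inr (by rw [h, v3, hr3, mul_assoc])⟩
  exact genDihedral 4 r t hr4 (ord4_lemma hr4 hr2') ht hrel hnc hcov

lemma q8_config (z x y : G) (hz : ∀ u : G, z * u = u * z) (hz1 : z ≠ 1) (hzz : z * z = 1)
    (hx2 : x * x = z) (hy2 : y * y = z) (hnc : y * x ≠ x * y) (hba : y * x = x * y * z)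
    (hcov8 : ∀ g : G, g = 1 ∨ g = z ∨ g = x ∨ g = x * z ∨ g = y ∨ g = y * z ∨ g = x * y ∨
      g = x * y * z) : Nonempty (G ≃* QuaternionGroup 2) := by
  have h4 : x ^ 4 = 1 := by
    calc x ^ 4 = (x * x) * (x * x) := by
          rw [pow_succ, pow_succ, pow_succ, pow_one, mul_assoc]
      _ = z * z := by rw [hx2]
      _ = 1 := hzz
  have h2' : x ^ 2 ≠ 1 := by rw [pow_two, hx2]; exact hz1
  have hxz : x * z = x⁻¹ := by
    have h1 : x * (x * z) = 1 := by rw [← mul_assoc, hx2, hzz]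
    exact (inv_eq_of_mul_eq_one_right h1).symm
  have hyz : y * z = y⁻¹ := by
    have h1 : y * (y * z) = 1 := by rw [← mul_assoc, hy2, hzz]
    exact (inv_eq_of_mul_eq_one_right h1).symm
  have hx4 : x ^ (2 * 2) = 1 := h4
  have hxo : ∀ m : ZMod (2 * 2), x ^ m.val = 1 → m = 0 := ord4_lemma h4 h2'
  have hy' : y * y = x ^ (((2 : ℕ) : ZMod (2 * 2))).val := by
    rw [show (((2 : ℕ) : ZMod (2 * 2))).val = 2 from by decide, pow_two, hx2, hy2]
  have hrel : y * x * y⁻¹ = x⁻¹ := by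
    calc y * x * y⁻¹ = x * y * z * y⁻¹ := by rw [hba]
      _ = x * y * (z * y⁻¹) := by rw [mul_assoc]
      _ = x * y * (y⁻¹ * z) := by rw [hz]
      _ = x * z := by group
      _ = x⁻¹ := hxz
  have hx3 : x ^ 3 = x * z := by
    calc x ^ 3 = x * (x * x) := by rw [pow_succ, pow_succ, pow_one, mul_assoc]
      _ = x * z := by rw [hx2]
  have v1 : ((1 : ZMod (2 * 2))).val = 1 := rfl
  have v2 : ((2 : ZMod (2 * 2))).val = 2 := rfl
  have v3 : ((3 : ZMod (2 * 2))).val = 3 := rfl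
  have hcov : ∀ g : G, ∃ i : ZMod (2 * 2), g = x ^ i.val ∨ g = y * x ^ i.val := by
    intro g
    rcases hcov8 g with h | h | h | h | h | h | h | h
    · exact ⟨0, Or.inl (by rw [h, ZMod.val_zero, pow_zero])⟩
    · exact ⟨2, Or.inl (by rw [h, v2, pow_two, hx2])⟩
    · exact ⟨1, Or.inl (by rw [h, v1, pow_one])⟩
    · exact ⟨3, Or.inl (by rw [h, v3, hx3])⟩
    · exact ⟨0, Or.inr (by rw [h, ZMod.val_zero, pow_zero, mul_one])⟩
    · exact ⟨2, Or.inr (by rw [h, v2, pow_two, hx2])⟩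
    · refine ⟨3, Or.inr ?_⟩
      rw [h, v3, hx3, ← mul_assoc, hba, mul_assoc (x * y), hzz, mul_one]
    · exact ⟨1, Or.inr (by rw [h, v1, pow_one, hba])⟩
  exact genQuaternion 2 x y hx4 hxo hy' hrel hnc hcov

end config

section big
variable {G : Type*} [Group G]

lemma caseZbig (hcf : (commGraph G).CliqueFree 3) (a0 b0 : G) (hab0 : a0 * b0 ≠ b0 * a0)
    (z : G) (hz : z ∈ Subgroup.center G) (hz1 : z ≠ 1) :
    Nonempty (G ≃* QuaternionGroup 2) ∨ Nonempty (G ≃* DihedralGroup 4) := by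
  have hzc : ∀ u : G, z * u = u * z := fun u => (Subgroup.mem_center_iff.1 hz u).symm
  have hCz : ∀ g : G, Commute g z := fun g => Subgroup.mem_center_iff.1 hz g
  have ha0 : a0 ∉ Subgroup.center G := fun h => hab0 (Subgroup.mem_center_iff.1 h b0).symm
  have hb0 : b0 ∉ Subgroup.center G := fun h => hab0 (Subgroup.mem_center_iff.1 h a0)
  -- center is {1, z}
  have hZ2 : ∀ w : G, w ∈ Subgroup.center G → w = 1 ∨ w = z := by
    intro w hw
    by_contra hcon
    push_neg at hcon
    obtain ⟨hw1, hwz⟩ := hcon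
    have hCw : ∀ g : G, Commute g w := fun g => Subgroup.mem_center_iff.1 hw g
    have hne1 : a0 ≠ a0 * z := fun h => hz1 (mul_left_cancel (a := a0) (by rw [← h, mul_one]))
    have hne2 : a0 ≠ a0 * w := fun h => hw1 (mul_left_cancel (a := a0) (by rw [← h, mul_one]))
    have hne3 : a0 * z ≠ a0 * w := fun h => hwz (mul_left_cancel (a := a0) h).symm
    have haz : a0 * z ∉ Subgroup.center G := fun h => ha0 (by
      have := mul_mem h (inv_mem hz); simpa using this)
    have haw : a0 * w ∉ Subgroup.center G := fun h => ha0 (by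
      have := mul_mem h (inv_mem hw); simpa using this)
    exact (cliqueFree3_iff _).1 hcf a0 (a0 * z) (a0 * w)
      ⟨hne1, ha0, haz, ((Commute.refl a0).mul_right (hCz a0)).eq⟩
      ⟨hne2, ha0, haw, ((Commute.refl a0).mul_right (hCw a0)).eq⟩
      ⟨hne3, haz, haw,
        (((Commute.refl a0).mul_right (hCw a0)).mul_left ((hCz a0).symm.mul_right (hCw z))).eq⟩
  have hzz : z * z = 1 := by
    rcases hZ2 (z * z) (mul_mem hz hz) with h | h
    · exact h
    · exact absurd (mul_right_cancel (b := z) (by rw [h, one_mul])) hz1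
  -- squares are central
  have hsq : ∀ x : G, x ∉ Subgroup.center G → x * x = 1 ∨ x * x = z := by
    intro x hx
    have h1 : x ≠ x * z := fun h => hz1 (mul_left_cancel (a := x) (by rw [← h, mul_one]))
    have hxz : x * z ∉ Subgroup.center G := fun h => hx (by
      have := mul_mem h (inv_mem hz); simpa using this)
    have hmem := hD_lemma hcf x (x * z) hx hxz h1 ((Commute.refl x).mul_right (hCz x)).eq
    rw [← mul_assoc] at hmem
    have h3 : x * x ∈ Subgroup.center G := by
      have := mul_mem hmem (inv_mem hz); simpa using this
    exact hZ2 _ h3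
  -- commutator relation
  have hzinv : z⁻¹ = z := inv_eq_of_mul_eq_one_right hzz
  have hcomm2 : ∀ x y : G, x * y ≠ y * x → y * x = x * y * z := by
    intro x y hn
    have hx : x ∉ Subgroup.center G := fun h => hn (Subgroup.mem_center_iff.1 h y).symm
    have hy : y ∉ Subgroup.center G := fun h => hn (Subgroup.mem_center_iff.1 h x)
    have hxy : x * y ∉ Subgroup.center G := by
      intro h
      apply hn
      have hc := Subgroup.mem_center_iff.1 h x⁻¹
      calc x * y = (x * y) * x⁻¹ * x := by group
        _ = (x⁻¹ * (x * y)) * x := by rw [hc]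
        _ = y * x := by group
    have master : y * x = x⁻¹ * ((x * y) * (x * y)) * y⁻¹ := by group
    have hxinv : x⁻¹ = x * (x * x)⁻¹ := by group
    have hyinv : y⁻¹ = y * (y * y)⁻¹ := by group
    rcases hsq x hx with h1 | h1 <;> rcases hsq y hy with h2 | h2 <;>
      rcases hsq (x * y) hxy with h3 | h3 <;>
      rw [hxinv, hyinv, h1, h2, h3] at master <;>
      simp only [inv_one, hzinv, one_mul, mul_one, mul_assoc, hzc, hzz] at master
    · exact absurd master.symm hn
    · rw [master, mul_assoc]
    · rw [master, mul_assoc]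
    · exact absurd master.symm hn
    · rw [master, mul_assoc]
    · exact absurd master.symm hn
    · exact absurd master.symm hn
    · rw [master, mul_assoc]
  have hba : b0 * a0 = a0 * b0 * z := hcomm2 a0 b0 hab0
  have habZ : a0 * b0 ∉ Subgroup.center G := by
    intro h
    apply hab0
    have hc := Subgroup.mem_center_iff.1 h a0⁻¹
    calc a0 * b0 = (a0 * b0) * a0⁻¹ * a0 := by group
      _ = (a0⁻¹ * (a0 * b0)) * a0 := by rw [hc]
      _ = b0 * a0 := by group
  have hcov8 : ∀ g : G, g = 1 ∨ g = z ∨ g = a0 ∨ g = a0 * z ∨ g = b0 ∨ g = b0 * z ∨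
      g = a0 * b0 ∨ g = a0 * b0 * z := by
    intro g
    by_cases hgZ : g ∈ Subgroup.center G
    · rcases hZ2 g hgZ with h | h
      · exact Or.inl h
      · exact Or.inr (Or.inl h)
    have hpair : ∀ u : G, u ∉ Subgroup.center G → g * u = u * g → g = u ∨ g = u * z := by
      intro u hu hcm
      by_cases hgu : g = u
      · exact Or.inl hgu
      · have hmem := hD_lemma hcf u g hu hgZ (Ne.symm hgu) hcm.symm
        rcases hZ2 _ hmem with h | h
        · have hginv : g = u⁻¹ := (inv_eq_of_mul_eq_one_right h).symm
          rcases hsq u hu with h2 | h2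
          · left; rw [hginv]; exact inv_eq_of_mul_eq_one_right h2
          · right
            have hh : u * (u * z) = 1 := by rw [← mul_assoc, h2, hzz]
            rw [hginv]; exact inv_eq_of_mul_eq_one_right hh
        · have hginv : g = u⁻¹ * z := by rw [← h]; group
          rcases hsq u hu with h2 | h2
          · right
            rw [hginv, inv_eq_of_mul_eq_one_right h2]
          · left
            have hu2 : u⁻¹ = u * z :=
              inv_eq_of_mul_eq_one_right (by rw [← mul_assoc, h2, hzz])
            rw [hginv, hu2, mul_assoc, hzz, mul_one]
    by_cases hga : g * a0 = a0 * g
    · rcases hpair a0 ha0 hga with h | h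
      · exact Or.inr (Or.inr (Or.inl h))
      · exact Or.inr (Or.inr (Or.inr (Or.inl h)))
    by_cases hgb : g * b0 = b0 * g
    · rcases hpair b0 hb0 hgb with h | h
      · right; right; right; right; left; exact h
      · right; right; right; right; right; left; exact h
    · have h1 : a0 * g = g * a0 * z := hcomm2 g a0 hga
      have h2 : b0 * g = g * b0 * z := hcomm2 g b0 hgb
      have hcab : g * (a0 * b0) = (a0 * b0) * g := by
        symm
        calc (a0 * b0) * g = a0 * (b0 * g) := by rw [mul_assoc]
          _ = a0 * (g * b0 * z) := by rw [h2]
          _ = (a0 * g) * b0 * z := by group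
          _ = (g * a0 * z) * b0 * z := by rw [h1]
          _ = g * a0 * (z * b0) * z := by group
          _ = g * a0 * (b0 * z) * z := by rw [hzc]
          _ = g * (a0 * b0) * (z * z) := by group
          _ = g * (a0 * b0) := by rw [hzz, mul_one]
      rcases hpair (a0 * b0) habZ hcab with h | h
      · right; right; right; right; right; right; left; exact h
      · right; right; right; right; right; right; right; exact h
  rcases hsq a0 ha0 with ha2 | ha2 <;> rcases hsq b0 hb0 with hb2 | hb2
  · right
    have htr : a0 * (a0 * b0) = b0 := by rw [← mul_assoc, ha2, one_mul]
    have hr2 : (a0 * b0) * (a0 * b0) = z := by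
      calc (a0 * b0) * (a0 * b0) = a0 * (b0 * a0) * b0 := by group
        _ = a0 * (a0 * b0 * z) * b0 := by rw [hba]
        _ = (a0 * a0) * b0 * (z * b0) := by group
        _ = (a0 * a0) * b0 * (b0 * z) := by rw [hzc]
        _ = (a0 * a0) * (b0 * b0) * z := by group
        _ = z := by rw [ha2, hb2, one_mul, one_mul]
    have hrt : (a0 * b0) * a0 = b0 * z := by
      calc (a0 * b0) * a0 = a0 * (b0 * a0) := by rw [mul_assoc]
        _ = a0 * (a0 * b0 * z) := by rw [hba]
        _ = (a0 * a0) * (b0 * z) := by group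
        _ = b0 * z := by rw [ha2, one_mul]
    have hnc : a0 * (a0 * b0) ≠ (a0 * b0) * a0 := by
      rw [htr, hrt]
      intro hh
      exact hz1 (mul_left_cancel (a := b0) (by rw [← hh, mul_one]))
    have hba' : (a0 * b0) * a0 = a0 * (a0 * b0) * z := by rw [hrt, htr]
    refine d8_config z a0 (a0 * b0) hzc hz1 hzz ha2 hr2 hnc hba' ?_
    intro g
    rcases hcov8 g with h | h | h | h | h | h | h | h
    · exact Or.inl h
    · right; left; exact h
    · right; right; left; exact h
    · right; right; right; left; exact h
    · right; right; right; right; right; right; left; rw [h, htr]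
    · right; right; right; right; right; right; right; rw [h, htr]
    · right; right; right; right; left; exact h
    · right; right; right; right; right; left; exact h
  · right
    exact d8_config z a0 b0 hzc hz1 hzz ha2 hb2 hab0 hba hcov8
  · right
    have hab' : a0 * b0 = b0 * a0 * z := by rw [hba, mul_assoc, hzz, mul_one]
    have hnc' : b0 * a0 ≠ a0 * b0 := fun hh => hab0 hh.symm
    refine d8_config z b0 a0 hzc hz1 hzz hb2 ha2 hnc' hab' ?_
    intro g
    rcases hcov8 g with h | h | h | h | h | h | h | h
    · exact Or.inl h
    · right; left; exact h
    · right; right; right; right; left; exact h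
    · right; right; right; right; right; left; exact h
    · right; right; left; exact h
    · right; right; right; left; exact h
    · right; right; right; right; right; right; right; rw [h, ← hab']
    · right; right; right; right; right; right; left; rw [h, hba]
  · left
    have hnc' : b0 * a0 ≠ a0 * b0 := fun hh => hab0 hh.symm
    exact q8_config z a0 b0 hzc hz1 hzz ha2 hb2 hnc' hba hcov8
end big

section triv
variable {G : Type*} [Group G]

lemma caseZtriv (hcf : (commGraph G).CliqueFree 3) (a0 b0 : G) (hab0 : a0 * b0 ≠ b0 * a0)
    (hZ : ∀ w ∈ Subgroup.center G, w = 1) :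
    Nonempty (G ≃* Equiv.Perm (Fin 3)) := by
  have hmem : ∀ x : G, x ≠ 1 → x ∉ Subgroup.center G := by
    intro x h1 hc
    exact h1 (hZ x hc)
  have hD1 : ∀ x y : G, x ≠ 1 → y ≠ 1 → x ≠ y → x * y = y * x → x * y = 1 :=
    fun x y hx hy hxy hc => hZ _ (hD_lemma hcf x y (hmem x hx) (hmem y hy) hxy hc)
  have hord : ∀ x : G, x ≠ 1 → x * x = 1 ∨ x * (x * x) = 1 := by
    intro x hx
    by_cases h2 : x * x = 1
    · exact Or.inl h2
    · right
      have hne : x ≠ x * x := by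
        intro h
        exact hx (mul_left_cancel (a := x) (show x * 1 = x * x by rw [mul_one, ← h])).symm
      exact hD1 x (x * x) hx h2 hne ((Commute.refl x).mul_right (Commute.refl x)).eq
  by_cases hT : ∃ t : G, t ≠ 1 ∧ t * t = 1
  · obtain ⟨t, ht1, ht2⟩ := hT
    have htinv : t⁻¹ = t := inv_eq_of_mul_eq_one_right ht2
    -- get an element of order 3
    have hA : ∃ a : G, a ≠ 1 ∧ a * a ≠ 1 := by
      by_contra h
      push_neg at h
      apply hab0
      have sq : ∀ g : G, g * g = 1 := by
        intro g
        by_cases hg : g = 1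
        · rw [hg, mul_one]
        · exact h g hg
      have hinv : ∀ g : G, g⁻¹ = g := fun g => inv_eq_of_mul_eq_one_right (sq g)
      calc a0 * b0 = (a0 * b0)⁻¹ := (hinv _).symm
        _ = b0⁻¹ * a0⁻¹ := by rw [mul_inv_rev]
        _ = b0 * a0 := by rw [hinv, hinv]
    obtain ⟨a, ha1, ha2⟩ := hA
    have ha3 : a * (a * a) = 1 := (hord a ha1).resolve_left ha2
    -- inversion lemma
    have L1 : ∀ s x : G, s ≠ 1 → s * s = 1 → x ≠ 1 → x * x ≠ 1 → s * x ≠ x * s →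
        s * x * s = x⁻¹ := by
      intro s x hs1 hs2 hx1 hx2 hnc
      have hx3 : x * (x * x) = 1 := (hord x hx1).resolve_left hx2
      have hsinv : s⁻¹ = s := inv_eq_of_mul_eq_one_right hs2
      have hsx1 : s * x ≠ 1 := by
        intro h
        apply hnc
        have hx : x = s⁻¹ := (inv_eq_of_mul_eq_one_right h).symm
        rw [hx]; group
      rcases hord (s * x) hsx1 with h2 | h3cube
      · have hh : (s * x * s) * x = 1 := by rw [← h2]; group
        exact eq_inv_of_mul_eq_one_left hh
      · exfalso
        have h3cube' : (x * s) * ((x * s) * (x * s)) = 1 := by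
          calc (x * s) * ((x * s) * (x * s)) = x * ((s * x) * ((s * x) * (s * x))) * x⁻¹ := by
                group
            _ = x * 1 * x⁻¹ := by rw [h3cube]
            _ = 1 := by group
        have key2 : s * x * s = x⁻¹ * s⁻¹ * x⁻¹ := by
          calc s * x * s = x⁻¹ * ((x * s) * ((x * s) * (x * s))) * s⁻¹ * x⁻¹ := by group
            _ = x⁻¹ * 1 * s⁻¹ * x⁻¹ := by rw [h3cube']
            _ = x⁻¹ * s⁻¹ * x⁻¹ := by rw [mul_one]
        have hxinv : x⁻¹ = x * x := inv_eq_of_mul_eq_one_right hx3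
        have hxx : x⁻¹ * x⁻¹ = x := by
          rw [hxinv]
          calc (x * x) * (x * x) = x * (x * (x * x)) := by group
            _ = x * 1 := by rw [hx3]
            _ = x := mul_one x
        have hs_q : s * (x * s * x⁻¹) = x⁻¹ * s * x := by
          calc s * (x * s * x⁻¹) = (s * x * s) * x⁻¹ := by group
            _ = (x⁻¹ * s⁻¹ * x⁻¹) * x⁻¹ := by rw [key2]
            _ = x⁻¹ * s⁻¹ * (x⁻¹ * x⁻¹) := by group
            _ = x⁻¹ * s⁻¹ * x := by rw [hxx]
            _ = x⁻¹ * s * x := by rw [hsinv]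
        have hsxi : s * x⁻¹ * s = x * s * x := by
          calc s * x⁻¹ * s = (s⁻¹ * x * s⁻¹)⁻¹ := by group
            _ = (s * x * s)⁻¹ := by rw [hsinv]
            _ = (x⁻¹ * s⁻¹ * x⁻¹)⁻¹ := by rw [key2]
            _ = x * s * x := by group
        have hq_s : (x * s * x⁻¹) * s = x⁻¹ * s * x := by
          calc (x * s * x⁻¹) * s = x * (s * x⁻¹ * s) := by group
            _ = x * (x * s * x) := by rw [hsxi]
            _ = (x * x) * s * x := by group
            _ = x⁻¹ * s * x := by rw [← hxinv]
        have hq : s * (x * s * x⁻¹) = (x * s * x⁻¹) * s := by rw [hs_q, hq_s]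
        have hqne1 : x * s * x⁻¹ ≠ 1 := by
          intro h
          apply hs1
          have hh : s = x⁻¹ * (x * s * x⁻¹) * x := by group
          rw [h] at hh
          simpa using hh
        have hqnes : x * s * x⁻¹ ≠ s := by
          intro h
          apply hnc
          have hh : x * s = s * x := by
            calc x * s = (x * s * x⁻¹) * x := by group
              _ = s * x := by rw [h]
          exact hh.symm
        have hone := hD1 s (x * s * x⁻¹) hs1 hqne1 (Ne.symm hqnes) hq
        apply hqnes
        have h5 : x * s * x⁻¹ = s⁻¹ := (inv_eq_of_mul_eq_one_right hone).symm
        rw [h5, hsinv]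
    -- t does not commute with order-3 elements (nor with other involutions ≠ t)
    have tnc : ∀ u : G, u ≠ 1 → u * u ≠ 1 → t * u ≠ u * t := by
      intro u hu1 hu2 hcm
      have htu : t ≠ u := by intro h; exact hu2 (h ▸ ht2)
      have hone := hD1 t u ht1 hu1 htu hcm
      apply hu2
      have hh : u = t⁻¹ := (inv_eq_of_mul_eq_one_right hone).symm
      rw [hh, htinv]
      exact ht2
    have tinv : ∀ u : G, u ≠ 1 → u * u ≠ 1 → t * u * t = u⁻¹ :=
      fun u h1 h2 => L1 t u ht1 ht2 h1 h2 (tnc u h1 h2)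
    -- all order-3 elements commute with a
    have L2 : ∀ g : G, g ≠ 1 → g * g ≠ 1 → g * a = a * g := by
      intro g hg1 hg2
      by_contra hnc
      have hg3 : g * (g * g) = 1 := (hord g hg1).resolve_left hg2
      have hta : t * a * t = a⁻¹ := tinv a ha1 ha2
      have htg : t * g * t = g⁻¹ := tinv g hg1 hg2
      have hta2 : t * a * t⁻¹ = a⁻¹ := by rw [htinv]; exact hta
      have hag1 : a * g ≠ 1 := by
        intro h
        apply hnc
        have hh : g = a⁻¹ := (inv_eq_of_mul_eq_one_right h).symm
        rw [hh]; group
      by_cases hag2 : (a * g) * (a * g) = 1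
      · have hinvg1 : a⁻¹ * g ≠ 1 := by
          intro h
          apply hnc
          have hh := inv_eq_of_mul_eq_one_right h
          rw [inv_inv] at hh
          rw [← hh]
        by_cases hinvg2 : (a⁻¹ * g) * (a⁻¹ * g) = 1
        · have e1 : g * a * g = a⁻¹ := by
            have hh : a * (g * a * g) = 1 := by rw [← hag2]; group
            exact (inv_eq_of_mul_eq_one_right hh).symm
          have e2 : g * a⁻¹ * g = a := by
            have hh : a⁻¹ * (g * a⁻¹ * g) = 1 := by rw [← hinvg2]; group
            have h' := inv_eq_of_mul_eq_one_right hh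
            rw [inv_inv] at h'
            exact h'.symm
          have e5 : (g * (g * g)) * a * (g * (g * g)) = a⁻¹ := by
            calc (g * (g * g)) * a * (g * (g * g)) = g * (g * (g * a * g) * g) * g := by group
              _ = g * (g * a⁻¹ * g) * g := by rw [e1]
              _ = g * a * g := by rw [e2]
              _ = a⁻¹ := e1
          have e6 : a = a⁻¹ := by
            rw [← e5, hg3, one_mul, mul_one]
          apply ha2
          nth_rewrite 2 [e6]
          exact mul_inv_cancel a
        · have hinvg3 : (a⁻¹ * g) * ((a⁻¹ * g) * (a⁻¹ * g)) = 1 :=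
            (hord _ hinvg1).resolve_left hinvg2
          have ha' : t * (a⁻¹ * g) * t = (a⁻¹ * g)⁻¹ := tinv _ hinvg1 hinvg2
          have lhs : t * (a⁻¹ * g) * t = a * g⁻¹ := by
            calc t * (a⁻¹ * g) * t = (t * a * t⁻¹)⁻¹ * (t * g * t) := by group
              _ = (a⁻¹)⁻¹ * g⁻¹ := by rw [hta2, htg]
              _ = a * g⁻¹ := by rw [inv_inv]
          have hcm : a * g⁻¹ = g⁻¹ * a := by
            calc a * g⁻¹ = t * (a⁻¹ * g) * t := lhs.symm
              _ = (a⁻¹ * g)⁻¹ := ha'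
              _ = g⁻¹ * a := by group
          apply hnc
          calc g * a = g * (a * g⁻¹) * g := by group
            _ = g * (g⁻¹ * a) * g := by rw [hcm]
            _ = a * g := by group
      · have hag3 : (a * g) * ((a * g) * (a * g)) = 1 := (hord _ hag1).resolve_left hag2
        have hinv3 : t * (a * g) * t = (a * g)⁻¹ := tinv _ hag1 hag2
        have lhs : t * (a * g) * t = a⁻¹ * g⁻¹ := by
          calc t * (a * g) * t = (t * a * t⁻¹) * (t * g * t) := by group
            _ = a⁻¹ * g⁻¹ := by rw [hta2, htg]
        have hcontra : a⁻¹ * g⁻¹ = g⁻¹ * a⁻¹ := by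
          calc a⁻¹ * g⁻¹ = t * (a * g) * t := lhs.symm
            _ = (a * g)⁻¹ := hinv3
            _ = g⁻¹ * a⁻¹ := by group
        apply hnc
        calc g * a = (a⁻¹ * g⁻¹)⁻¹ := by group
          _ = (g⁻¹ * a⁻¹)⁻¹ := by rw [hcontra]
          _ = a * g := by group
    -- coverage
    have hainv : a⁻¹ = a * a := inv_eq_of_mul_eq_one_right ha3
    have v1 : ((1 : ZMod 3)).val = 1 := rfl
    have v2 : ((2 : ZMod 3)).val = 2 := rfl
    have hcov : ∀ g : G, ∃ i : ZMod 3, g = a ^ i.val ∨ g = t * a ^ i.val := by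
      intro g
      by_cases hg1 : g = 1
      · exact ⟨0, Or.inl (by rw [hg1, ZMod.val_zero, pow_zero])⟩
      by_cases hg2 : g * g = 1
      · by_cases hgt : g = t
        · exact ⟨0, Or.inr (by rw [hgt, ZMod.val_zero, pow_zero, mul_one])⟩
        · have htg1 : t * g ≠ 1 := by
            intro h
            apply hgt
            have hh : t⁻¹ = g := inv_eq_of_mul_eq_one_right h
            rw [← hh, htinv]
          have htg2 : (t * g) * (t * g) ≠ 1 := by
            intro h
            have hginv : g⁻¹ = g := inv_eq_of_mul_eq_one_right hg2
            have hcm : t * g = g * t := by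
              calc t * g = (t * g)⁻¹ := ((inv_eq_of_mul_eq_one_right h).symm : t * g = (t*g)⁻¹)
                _ = g⁻¹ * t⁻¹ := by group
                _ = g * t := by rw [hginv, htinv]
            exact htg1 (hD1 t g ht1 hg1 (fun hh => hgt hh.symm) hcm)
          have hc := L2 (t * g) htg1 htg2
          by_cases he : t * g = a
          · refine ⟨1, Or.inr ?_⟩
            rw [v1, pow_one, ← he, ← mul_assoc, ht2, one_mul]
          · have hone := hD1 a (t * g) ha1 htg1 (fun hh => he hh.symm) hc.symm
            have htga : t * g = a⁻¹ := (inv_eq_of_mul_eq_one_right hone).symm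
            refine ⟨2, Or.inr ?_⟩
            rw [v2, pow_two, ← hainv, ← htga, ← mul_assoc, ht2, one_mul]
      · have hc := L2 g hg1 hg2
        by_cases he : g = a
        · exact ⟨1, Or.inl (by rw [v1, pow_one, he])⟩
        · have hone := hD1 a g ha1 hg1 (fun hh => he hh.symm) hc.symm
          have hga : g = a⁻¹ := (inv_eq_of_mul_eq_one_right hone).symm
          exact ⟨2, Or.inl (by rw [v2, pow_two, ← hainv, hga])⟩
    have hA3 : a ^ 3 = 1 := by
      rw [pow_succ, pow_succ, pow_one, mul_assoc]
      exact ha3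
    obtain ⟨e⟩ := genDihedral 3 a t hA3 (ord3_lemma hA3 ha1) ht2 (tinv a ha1 ha2)
      (tnc a ha1 ha2) hcov
    obtain ⟨d⟩ := perm3_equiv_dihedral
    exact ⟨e.trans d.symm⟩
  · -- no involutions: exponent 3, contradiction
    exfalso
    push_neg at hT
    have h3 : ∀ g : G, g * (g * g) = 1 := by
      intro g
      by_cases hg : g = 1
      · rw [hg, one_mul, one_mul]
      · exact (hord g hg).resolve_left (hT g hg)
    have R : ∀ u v : G, v * u * v = u⁻¹ * v⁻¹ * u⁻¹ := by
      intro u v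
      have h := h3 (u * v)
      calc v * u * v = u⁻¹ * ((u * v) * ((u * v) * (u * v))) * v⁻¹ * u⁻¹ := by group
        _ = u⁻¹ * 1 * v⁻¹ * u⁻¹ := by rw [h]
        _ = u⁻¹ * v⁻¹ * u⁻¹ := by rw [mul_one]
    have haa : a0 * a0 = a0⁻¹ := (inv_eq_of_mul_eq_one_right (h3 a0)).symm
    have hbb : b0 * b0 = b0⁻¹ := (inv_eq_of_mul_eq_one_right (h3 b0)).symm
    have hx1 : a0 * b0 ≠ 1 := by
      intro h
      apply hab0
      have hh : b0 = a0⁻¹ := (inv_eq_of_mul_eq_one_right h).symm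
      rw [hh]; group
    have hy1 : b0 * a0 ≠ 1 := by
      intro h
      apply hab0
      have hh : a0 = b0⁻¹ := (inv_eq_of_mul_eq_one_right h).symm
      rw [hh]; group
    have hcomm : (a0 * b0) * (b0 * a0) = (b0 * a0) * (a0 * b0) := by
      have e1 : (a0 * b0) * (b0 * a0) = b0 * a0⁻¹ * b0 := by
        calc (a0 * b0) * (b0 * a0) = a0 * (b0 * b0) * a0 := by group
          _ = a0 * b0⁻¹ * a0 := by rw [hbb]
          _ = (b0⁻¹)⁻¹ * a0⁻¹ * (b0⁻¹)⁻¹ := R b0⁻¹ a0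
          _ = b0 * a0⁻¹ * b0 := by rw [inv_inv]
      have e2 : (b0 * a0) * (a0 * b0) = b0 * a0⁻¹ * b0 := by
        calc (b0 * a0) * (a0 * b0) = b0 * (a0 * a0) * b0 := by group
          _ = b0 * a0⁻¹ * b0 := by rw [haa]
      rw [e1, e2]
    have hone := hD1 _ _ hx1 hy1 hab0 hcomm
    have hb2 : b0 * b0 = a0⁻¹ * a0⁻¹ := by
      calc b0 * b0 = a0⁻¹ * ((a0 * b0) * (b0 * a0)) * a0⁻¹ := by group
        _ = a0⁻¹ * 1 * a0⁻¹ := by rw [hone]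
        _ = a0⁻¹ * a0⁻¹ := by rw [mul_one]
    have hbval : b0 = a0 * a0 := by
      have h1 : b0 = (b0 * b0)⁻¹ := by
        rw [← inv_eq_of_mul_eq_one_right (h3 b0), inv_inv]
      rw [h1, hb2, mul_inv_rev, inv_inv]
    apply hab0
    rw [hbval]
    group

end triv


/-- The commuting graph of a non-abelian group has no 3-cycle iff the group is
isomorphic to S₃, Q₈ or D₈. -/
theorem stmt_0 (G : Type*) [Group G] (hG : ∃ a b : G, a * b ≠ b * a) :
    (commGraph G).CliqueFree 3 ↔
      (Nonempty (G ≃* Equiv.Perm (Fin 3)) ∨ Nonempty (G ≃* QuaternionGroup 2) ∨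
        Nonempty (G ≃* DihedralGroup 4)) := by
  constructor
  · intro hcf
    obtain ⟨a0, b0, hab0⟩ := hG
    by_cases hZ : ∀ w ∈ Subgroup.center G, w = 1
    · exact Or.inl (caseZtriv hcf a0 b0 hab0 hZ)
    · push_neg at hZ
      obtain ⟨z, hz, hz1⟩ := hZ
      rcases caseZbig hcf a0 b0 hab0 z hz hz1 with h | h
      · exact Or.inr (Or.inl h)
      · exact Or.inr (Or.inr h)
  · rintro (h | h | h)
    · obtain ⟨e⟩ := h
      exact commGraph_cliqueFree_congr e cf_s3
    · obtain ⟨e⟩ := h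
      exact commGraph_cliqueFree_congr e cf_q8
    · obtain ⟨e⟩ := h
      exact commGraph_cliqueFree_congr e cf_d8
end

section
/- The girth of the commuting graph of a non-abelian group is either 3 or infinite (i.e., if the commuting graph contains any cycle, it contains a triangle). -/
lemma egirth_eq_three_of_triangle {V : Type*} {H : SimpleGraph V} {a b c : V}
    (hab : H.Adj a b) (hbc : H.Adj b c) (hca : H.Adj c a) : H.egirth = 3 := by
  have hac : a ≠ c := fun h => (h ▸ hca).ne rfl
  let w : H.Walk a a := SimpleGraph.Walk.cons hab
    (SimpleGraph.Walk.cons hbc (SimpleGraph.Walk.cons hca SimpleGraph.Walk.nil))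
  have hw : w.IsCycle := by
    rw [SimpleGraph.Walk.cons_isCycle_iff]
    constructor
    · rw [SimpleGraph.Walk.isPath_def]
      simp [hbc.ne, hca.ne, hac, hab.ne']
    · simp [hab.ne, hac, Sym2.eq_iff]
      exact fun h => hbc.ne h
  have h3 : H.egirth ≤ 3 := by
    have := (SimpleGraph.le_egirth.mp (le_refl H.egirth)) a w hw
    simpa [w] using this
  exact le_antisymm h3 SimpleGraph.three_le_egirth

lemma tri_of_path {G : Type*} [Group G] {x y z : G}
    (hxy : (commGraph G).Adj x y) (hyz : (commGraph G).Adj y z) (hxz : x ≠ z) :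
    (commGraph G).egirth = 3 := by
  obtain ⟨ne1, hx, hy, c1⟩ := hxy
  obtain ⟨ne2, -, hz, c2⟩ := hyz
  by_cases h : x * z = z * x
  · exact egirth_eq_three_of_triangle (H := commGraph G)
      ⟨ne1, hx, hy, c1⟩ ⟨ne2, hy, hz, c2⟩ ⟨hxz.symm, hz, hx, h.symm⟩
  · -- triangle y, x, y*x
    have hyx_ne : y * x ∉ Subgroup.center G := by
      intro hm
      apply h
      have hm' := Subgroup.mem_center_iff.mp hm
      have hzy : Commute z y := (Commute.symm c2)
      have hzyx : Commute z (y * x) := hm' z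
      have hzx : Commute z x := by
        have : x = y⁻¹ * (y * x) := by group
        rw [this]
        exact Commute.mul_right hzy.inv_right hzyx
      exact hzx.symm
    have h1 : y * x ≠ x := by
      intro hh
      apply hy
      have : y = 1 := by
        have hh' : y * x = 1 * x := by rw [hh, one_mul]
        exact mul_right_cancel hh'
      rw [this]; exact Subgroup.one_mem _
    have h2 : y * x ≠ y := by
      intro hh
      apply hx
      have : x = 1 := by
        have hh' : y * x = y * 1 := by rw [hh, mul_one]
        exact mul_left_cancel hh'
      rw [this]; exact Subgroup.one_mem _
    refine egirth_eq_three_of_triangle (H := commGraph G)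
      ⟨ne1.symm, hy, hx, c1.symm⟩ ⟨h1.symm, hx, hyx_ne, ?_⟩ ⟨h2, hyx_ne, hy, ?_⟩
    · -- x * (y*x) = (y*x) * x
      rw [← mul_assoc, c1]
    · -- (y*x) * y = y * (y*x)
      rw [mul_assoc, c1, ← mul_assoc]

/-- The girth of the commuting graph of a non-abelian group is 3 or infinite. -/
theorem stmt_3 (G : Type*) [Group G] (hG : ∃ a b : G, a * b ≠ b * a) :
    (commGraph G).egirth = 3 ∨ (commGraph G).egirth = ⊤ := by
  by_cases hac : (commGraph G).IsAcyclic
  · exact Or.inr (SimpleGraph.egirth_eq_top.mpr hac)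
  left
  rw [SimpleGraph.IsAcyclic] at hac
  push_neg at hac
  obtain ⟨v, w, hw⟩ := hac
  have h3 := hw.three_le_length
  cases w with
  | nil => simp at h3
  | cons h₁ w' =>
    cases w' with
    | nil => simp at h3
    | @cons b c _ h₂ p =>
      -- v adj b, b adj c, p : Walk c v
      have hcyc := hw
      rw [SimpleGraph.Walk.cons_isCycle_iff] at hcyc
      obtain ⟨hpath, -⟩ := hcyc
      rw [SimpleGraph.Walk.cons_isPath_iff] at hpath
      obtain ⟨hppath, -⟩ := hpath
      have hvc : v ≠ c := by
        intro hh
        subst hh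
        have : p = SimpleGraph.Walk.nil := SimpleGraph.Walk.isPath_iff_eq_nil.mp hppath
        subst this
        simp at h3
      exact tri_of_path h₁ h₂ hvc
end

section
/- Let G be a non-abelian group of order 16 with |Z(G)| = 4. Then G is an AC-group, i.e., the centralizer of every non-central element of G is abelian, and moreover for each non-central x, C_G(x) = ⟨x⟩Z(G) and |C_G(x)| = 8. -/
/-- A non-abelian group of order 16 with center of order 4 is an AC-group; moreover the
centralizer of every non-central element x equals ⟨x⟩Z(G) and has order 8. -/
theorem stmt_10 (G : Type*) [Group G] (hcard : Nat.card G = 16)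
    (hZ : Nat.card (Subgroup.center G) = 4) (hG : ∃ a b : G, a * b ≠ b * a) :
    ∀ x : G, x ∉ Subgroup.center G →
      (∀ a ∈ Subgroup.centralizer {x}, ∀ b ∈ Subgroup.centralizer {x}, a * b = b * a) ∧
      Subgroup.centralizer {x} = Subgroup.closure {x} ⊔ Subgroup.center G ∧
      Nat.card (Subgroup.centralizer ({x} : Set G)) = 8 := by
  have hfin : Finite G := Nat.finite_of_card_ne_zero (by rw [hcard]; norm_num)
  intro x hx
  set H := Subgroup.centralizer ({x} : Set G) with hH
  set K := Subgroup.closure {x} ⊔ Subgroup.center G with hK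
  have hxH : x ∈ H := Subgroup.mem_centralizer_iff.2 (by simp)
  have hZH : Subgroup.center G ≤ H := Subgroup.center_le_centralizer _
  have hKH : K ≤ H := sup_le (by rwa [Subgroup.closure_le, Set.singleton_subset_iff]) hZH
  have hxK : x ∈ K := Subgroup.mem_sup_left (Subgroup.subset_closure rfl)
  have hZK : Subgroup.center G ≤ K := le_sup_right
  -- H ≠ ⊤
  have hHtop : H ≠ ⊤ := by
    intro h
    apply hx
    rw [Subgroup.mem_center_iff]
    intro g
    have : g ∈ H := h ▸ Subgroup.mem_top g
    exact (Subgroup.mem_centralizer_iff.1 this x rfl).symm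
  -- cardinalities
  have h1 : Nat.card H ∣ 16 := hcard ▸ Subgroup.card_subgroup_dvd_card H
  have h2 : Nat.card K ∣ Nat.card H := Subgroup.card_dvd_of_le hKH
  have h3 : (4 : ℕ) ∣ Nat.card K := hZ ▸ Subgroup.card_dvd_of_le hZK
  have hKne : Nat.card K ≠ 4 := by
    intro h
    have : Subgroup.center G = K := Subgroup.eq_of_le_of_card_ge hZK (by rw [h, hZ])
    exact hx (this ▸ hxK)
  have hHne : Nat.card H ≠ 16 := by
    intro h
    exact hHtop (Subgroup.eq_top_of_card_eq H (by rw [h, hcard]))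
  have hHpos : 0 < Nat.card H := Nat.card_pos
  have hH16 : Nat.card H ≤ 16 := Nat.le_of_dvd (by norm_num) h1
  have key : ∀ m n : ℕ, 0 < m → m ∣ n → n ∣ 16 → 4 ∣ m → m ≠ 4 → n ≠ 16 → m = 8 ∧ n = 8 := by
    intro m n hm hmn hn h4 hm4 hn16
    have hnpos : 0 < n := Nat.pos_of_dvd_of_pos hn (by norm_num)
    have hn' : n ≤ 16 := Nat.le_of_dvd (by norm_num) hn
    have hmle : m ≤ n := Nat.le_of_dvd hnpos hmn
    interval_cases n <;> interval_cases m <;> omega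
  have hcards : Nat.card K = 8 ∧ Nat.card H = 8 :=
    key _ _ Nat.card_pos h2 h1 h3 hKne hHne
  have hKeqH : H = K := (Subgroup.eq_of_le_of_card_ge hKH (by rw [hcards.1, hcards.2])).symm
  refine ⟨?_, hKeqH, hcards.2⟩
  -- commutativity
  intro a ha b hb
  have hbc : b ∈ Subgroup.centralizer ({a} : Set G) := by
    have : K ≤ Subgroup.centralizer ({a} : Set G) := by
      apply sup_le
      · rw [Subgroup.closure_le, Set.singleton_subset_iff]
        exact Subgroup.mem_centralizer_iff.2 (by simpa using (Subgroup.mem_centralizer_iff.1 ha x rfl).symm)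
      · exact Subgroup.center_le_centralizer _
    exact this (hKeqH ▸ hb)
  exact Subgroup.mem_centralizer_iff.1 hbc a rfl
end
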